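/- For ε ∈ Sym₂(ℝ²) and ϑ ∈ ℝ², the following are equivalent: (i) for all ζ, τ ∈ ℝ², (ε + ζ ⊗ₛ ϑ) : (τ⊗τ) ≤ (I + ζ⊗ζ) : (τ⊗τ); (ii) (1/4)·ϑ⊗ϑ + ε ⪯ I. Here ζ ⊗ₛ ϑ = (ζ⊗ϑ + ϑ⊗ζ)/2 is the symmetric tensor product. -/

import Mathlib

open Matrix

/-- Frobenius inner product of 2×2 matrices. -/
def frob2 (A B : Matrix (Fin 2) (Fin 2) ℝ) : ℝ := ∑ i, ∑ j, A i j * B i j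

lemma frob2_lhs (ε : Matrix (Fin 2) (Fin 2) ℝ) (ϑ ζ τ : Fin 2 → ℝ) :
    frob2 (ε + (1/2 : ℝ) • (Matrix.vecMulVec ζ ϑ + Matrix.vecMulVec ϑ ζ))
        (Matrix.vecMulVec τ τ) = τ ⬝ᵥ ε *ᵥ τ + (ζ ⬝ᵥ τ) * (ϑ ⬝ᵥ τ) := by
  simp [frob2, Fin.sum_univ_two, vecMulVec_apply, dotProduct, mulVec,
    Matrix.add_apply, Matrix.smul_apply]
  ring

lemma frob2_rhs (ζ τ : Fin 2 → ℝ) :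
    frob2 ((1 : Matrix (Fin 2) (Fin 2) ℝ) + Matrix.vecMulVec ζ ζ)
        (Matrix.vecMulVec τ τ) = τ ⬝ᵥ τ + (ζ ⬝ᵥ τ) ^ 2 := by
  simp [frob2, Fin.sum_univ_two, vecMulVec_apply, dotProduct,
    Matrix.add_apply, Matrix.one_apply]
  ring

lemma quad_M (ε : Matrix (Fin 2) (Fin 2) ℝ) (ϑ x : Fin 2 → ℝ) :
    x ⬝ᵥ (((1 : Matrix (Fin 2) (Fin 2) ℝ) -
        ((1/4 : ℝ) • Matrix.vecMulVec ϑ ϑ + ε)) *ᵥ x)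
      = x ⬝ᵥ x - (1/4) * (ϑ ⬝ᵥ x) ^ 2 - x ⬝ᵥ ε *ᵥ x := by
  simp [Fin.sum_univ_two, vecMulVec_apply, dotProduct, mulVec,
    Matrix.sub_apply, Matrix.add_apply, Matrix.smul_apply, Matrix.one_apply]
  ring

/-- (∀ ζ τ, (ε + ζ⊗ₛϑ):(τ⊗τ) ≤ (I + ζ⊗ζ):(τ⊗τ)) ↔ (1/4)ϑ⊗ϑ + ε ⪯ I. -/
theorem stmt2 (ε : Matrix (Fin 2) (Fin 2) ℝ) (ϑ : Fin 2 → ℝ) (hε : ε.IsHermitian) :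
    (∀ ζ τ : Fin 2 → ℝ,
        frob2 (ε + (1/2 : ℝ) • (Matrix.vecMulVec ζ ϑ + Matrix.vecMulVec ϑ ζ))
            (Matrix.vecMulVec τ τ) ≤
          frob2 ((1 : Matrix (Fin 2) (Fin 2) ℝ) + Matrix.vecMulVec ζ ζ)
            (Matrix.vecMulVec τ τ)) ↔
      ((1 : Matrix (Fin 2) (Fin 2) ℝ) -
        ((1/4 : ℝ) • Matrix.vecMulVec ϑ ϑ + ε)).PosSemidef := by
  have hherm : ((1 : Matrix (Fin 2) (Fin 2) ℝ) -
      ((1/4 : ℝ) • Matrix.vecMulVec ϑ ϑ + ε)).IsHermitian := by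
    have hv : (Matrix.vecMulVec ϑ ϑ).IsHermitian := by
      ext i j
      simp [Matrix.IsHermitian, conjTranspose_apply, vecMulVec_apply, mul_comm]
    have hv' : (((1/4 : ℝ)) • Matrix.vecMulVec ϑ ϑ).IsHermitian := by
      ext i j
      simp [Matrix.IsHermitian, conjTranspose_apply, vecMulVec_apply, mul_comm]
    exact Matrix.isHermitian_one.sub (hv'.add hε)
  constructor
  · intro h
    refine posSemidef_iff_dotProduct_mulVec.mpr ⟨hherm, fun x => ?_⟩
    have hst : star x = x := by simp
    rw [hst, quad_M]
    by_cases hx : x = 0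
    · simp [hx]
    · have hxx : (0 : ℝ) < x ⬝ᵥ x := by
        have hform : x ⬝ᵥ x = x 0 ^ 2 + x 1 ^ 2 := by
          simp [dotProduct, Fin.sum_univ_two]; ring
        rcases Function.ne_iff.mp hx with ⟨i, hi⟩
        fin_cases i
        · have := pow_two_pos_of_ne_zero (by simpa using hi)
          nlinarith [sq_nonneg (x 1)]
        · have := pow_two_pos_of_ne_zero (by simpa using hi)
          nlinarith [sq_nonneg (x 0)]
      have hkey := h (((ϑ ⬝ᵥ x) / (2 * (x ⬝ᵥ x))) • x) x
      rw [frob2_lhs, frob2_rhs, smul_dotProduct] at hkey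
      have hne : (x ⬝ᵥ x) ≠ 0 := ne_of_gt hxx
      have hs : ((ϑ ⬝ᵥ x) / (2 * (x ⬝ᵥ x))) * (x ⬝ᵥ x) = (ϑ ⬝ᵥ x) / 2 := by
        rw [div_mul_eq_mul_div, mul_comm (2:ℝ) (x ⬝ᵥ x), ← div_div,
          mul_div_assoc, div_self hne, mul_one]
      rw [smul_eq_mul, hs] at hkey
      nlinarith [hkey]
  · intro h ζ τ
    rw [frob2_lhs, frob2_rhs]
    have hq := h.dotProduct_mulVec_nonneg τ
    have hst : star τ = τ := by simp
    rw [hst, quad_M] at hq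
    nlinarith [sq_nonneg (ζ ⬝ᵥ τ - (ϑ ⬝ᵥ τ) / 2)]
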